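/- Let G = (V, E) be a simple undirected connected graph. For a friendly vertex labeling f of G, let Λ(G, f) denote the number of edges {u,v} of G with f(u) = f(v). Then G is (2,3)-orientable if and only if there exists a friendly vertex labeling f of G such that Λ(G, f) = ⌈|E|/3⌉ or Λ(G, f) = ⌊|E|/3⌋. -/

import Mathlib

open Finset

variable {V : Type*} [Fintype V] [DecidableEq V]

/-- The label induced on an arc `a = (u, v)` by a vertex labeling `f : V → {0,1}`:
`g(u→v) = f(v) - f(u)`. -/
def arcLabel (f : V → Fin 2) (a : V × V) : ℤ := ((f a.2 : ℕ) : ℤ) - ((f a.1 : ℕ) : ℤ)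

/-- The number of arcs of `A` receiving induced label `i`. -/
def labelCount (A : Finset (V × V)) (f : V → Fin 2) (i : ℤ) : ℕ :=
  (A.filter fun a => arcLabel f a = i).card

/-- A vertex labeling `f : V → {0,1}` is friendly if the number of vertices labeled `0`
and the number labeled `1` differ by at most `1`. -/
def Friendly (f : V → Fin 2) : Prop :=
  |((univ.filter fun v => f v = 0).card : ℤ) - ((univ.filter fun v => f v = 1).card : ℤ)| ≤ 1

/-- A digraph (given by its arc set `A`) is (2,3)-cordial if there is a friendly vertex
labeling whose induced arc labeling `g` satisfies
`-1 ≤ |g⁻¹(i)| - |g⁻¹(j)| ≤ 1` for all `i, j ∈ {-1, 0, 1}`. -/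
def Cordial (A : Finset (V × V)) : Prop :=
  ∃ f : V → Fin 2, Friendly f ∧
    ∀ i ∈ ({-1, 0, 1} : Finset ℤ), ∀ j ∈ ({-1, 0, 1} : Finset ℤ),
      -1 ≤ (labelCount A f i : ℤ) - (labelCount A f j : ℤ) ∧
        (labelCount A f i : ℤ) - (labelCount A f j : ℤ) ≤ 1

/-- `A` is an orientation of the simple graph `G`: every arc of `A` lies along an
edge of `G`, and each edge `{u,v}` of `G` carries exactly one of the arcs
`u→v`, `v→u`. -/
def IsOrientation (G : SimpleGraph V) (A : Finset (V × V)) : Prop :=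
  (∀ a ∈ A, G.Adj a.1 a.2) ∧ ∀ u v : V, G.Adj u v → ((u, v) ∈ A ↔ (v, u) ∉ A)

/-- A graph is (2,3)-orientable if some orientation of it is (2,3)-cordial. -/
def Orientable (G : SimpleGraph V) : Prop :=
  ∃ A : Finset (V × V), IsOrientation G A ∧ Cordial A

/-- `Λ(G, f)`: the number of edges of `G` both of whose endpoints receive the same
label under `f`. -/
def Lambda (G : SimpleGraph V) [DecidableRel G.Adj] (f : V → Fin 2) : ℕ :=
  (G.edgeFinset.filter fun e => ∀ u ∈ e, ∀ v ∈ e, f u = f v).card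

lemma fin2_eq (x : Fin 2) : x = 0 ∨ x = 1 := by fin_cases x <;> simp

lemma arcLabel_eq_zero_iff (f : V → Fin 2) (a : V × V) :
    arcLabel f a = 0 ↔ f a.1 = f a.2 := by
  unfold arcLabel
  rcases fin2_eq (f a.1) with h1 | h1 <;> rcases fin2_eq (f a.2) with h2 | h2 <;>
    simp [h1, h2] <;> decide

lemma arcLabel_eq_one_iff (f : V → Fin 2) (a : V × V) :
    arcLabel f a = 1 ↔ f a.1 = 0 ∧ f a.2 = 1 := by
  unfold arcLabel
  rcases fin2_eq (f a.1) with h1 | h1 <;> rcases fin2_eq (f a.2) with h2 | h2 <;>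
    simp [h1, h2] <;> decide

lemma mono_iff (f : V → Fin 2) (u v : V) :
    (∀ x ∈ s(u,v), ∀ y ∈ s(u,v), f x = f y) ↔ f u = f v := by
  constructor
  · intro h; exact h u (Sym2.mem_mk_left u v) v (Sym2.mem_mk_right u v)
  · intro h x hx y hy
    rcases Sym2.mem_iff.mp hx with rfl | rfl <;> rcases Sym2.mem_iff.mp hy with rfl | rfl <;>
      simp [h]

lemma card_filter_orientation {G : SimpleGraph V} [DecidableRel G.Adj]
    {A : Finset (V × V)} (hA : IsOrientation G A)
    (q : Sym2 V → Prop) [DecidablePred q] :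
    (A.filter fun a => q s(a.1, a.2)).card = (G.edgeFinset.filter q).card := by
  apply Finset.card_bij (fun a _ => s(a.1, a.2))
  · intro a ha
    rw [mem_filter] at ha ⊢
    exact ⟨SimpleGraph.mem_edgeFinset.mpr ((SimpleGraph.mem_edgeSet G).mpr (hA.1 a ha.1)), ha.2⟩
  · rintro ⟨u, v⟩ h1 ⟨x, y⟩ h2 heq
    rw [mem_filter] at h1 h2
    rcases Sym2.eq_iff.mp heq with ⟨rfl, rfl⟩ | ⟨rfl, rfl⟩
    · rfl
    · exact absurd h1.1 (((hA.2 _ _ (hA.1 _ h2.1)).mp h2.1))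
  · intro e he
    induction e using Sym2.ind with
    | _ u v =>
      rw [mem_filter] at he
      have hadj : G.Adj u v := (SimpleGraph.mem_edgeSet G).mp (SimpleGraph.mem_edgeFinset.mp he.1)
      by_cases h : (u, v) ∈ A
      · exact ⟨(u, v), mem_filter.mpr ⟨h, he.2⟩, rfl⟩
      · have h' : (v, u) ∈ A := by
          by_contra h''
          exact h ((hA.2 u v hadj).mpr h'')
        exact ⟨(v, u), mem_filter.mpr ⟨h', by simpa [Sym2.eq_swap] using he.2⟩, Sym2.eq_swap⟩

lemma labelCount_zero {G : SimpleGraph V} [DecidableRel G.Adj]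
    {A : Finset (V × V)} (hA : IsOrientation G A) (f : V → Fin 2) :
    labelCount A f 0 = Lambda G f := by
  unfold labelCount Lambda
  rw [← card_filter_orientation hA (fun e => ∀ u ∈ e, ∀ v ∈ e, f u = f v)]
  congr 1
  apply filter_congr
  rintro ⟨u, v⟩ _
  rw [arcLabel_eq_zero_iff, mono_iff]

lemma card_orientation {G : SimpleGraph V} [DecidableRel G.Adj]
    {A : Finset (V × V)} (hA : IsOrientation G A) :
    A.card = G.edgeFinset.card := by
  have := card_filter_orientation hA (fun _ => True)
  simpa using this

lemma labelCount_sum (A : Finset (V × V)) (f : V → Fin 2) :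
    labelCount A f (-1) + labelCount A f 0 + labelCount A f 1 = A.card := by
  unfold labelCount
  have h1 := Finset.card_filter_add_card_filter_not (s := A) (p := fun a => arcLabel f a = -1)
  have h2 := Finset.card_filter_add_card_filter_not
    (s := A.filter fun a => ¬ arcLabel f a = -1) (p := fun a => arcLabel f a = 0)
  have e1 : ((A.filter fun a => ¬ arcLabel f a = -1).filter fun a => arcLabel f a = 0)
      = A.filter fun a => arcLabel f a = 0 := by
    rw [filter_filter]
    apply filter_congr
    intro a _
    constructor
    · tauto
    · intro h; exact ⟨by omega, h⟩
  have e2 : ((A.filter fun a => ¬ arcLabel f a = -1).filter fun a => ¬ arcLabel f a = 0)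
      = A.filter fun a => arcLabel f a = 1 := by
    rw [filter_filter]
    apply filter_congr
    intro a _
    have htri : arcLabel f a = -1 ∨ arcLabel f a = 0 ∨ arcLabel f a = 1 := by
      unfold arcLabel
      rcases fin2_eq (f a.1) with h1 | h1 <;> rcases fin2_eq (f a.2) with h2 | h2 <;>
        simp [h1, h2]
    constructor
    · intro h; omega
    · intro h; omega
  rw [e1, e2] at h2
  omega

/-- A simple connected graph `G` is (2,3)-orientable if and only if there is a friendly
vertex labeling `f` of `G` with `Λ(G, f) = ⌈|E|/3⌉` or `Λ(G, f) = ⌊|E|/3⌋`. -/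
theorem orientable_iff_lambda (G : SimpleGraph V) [DecidableRel G.Adj]
    (hG : G.Connected) :
    Orientable G ↔ ∃ f : V → Fin 2, Friendly f ∧
      (Lambda G f = (G.edgeFinset.card + 2) / 3 ∨ Lambda G f = G.edgeFinset.card / 3) := by
  constructor
  · rintro ⟨A, hA, f, hf, hcord⟩
    refine ⟨f, hf, ?_⟩
    have h0 : labelCount A f 0 = Lambda G f := labelCount_zero hA f
    have hcard : A.card = G.edgeFinset.card := card_orientation hA
    have hsum := labelCount_sum A f
    have h01 := hcord 0 (by simp) 1 (by simp)
    have h0m := hcord 0 (by simp) (-1) (by simp)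
    omega
  · rintro ⟨f, hf, ht⟩
    set m := G.edgeFinset.card with hm
    set t := Lambda G f with htdef
    have hMcard : t + (G.edgeFinset.filter fun e => ¬ ∀ u ∈ e, ∀ v ∈ e, f u = f v).card = m := by
      rw [htdef, hm]
      exact Finset.card_filter_add_card_filter_not _
    set M := G.edgeFinset.filter fun e => ¬ ∀ u ∈ e, ∀ v ∈ e, f u = f v with hMdef
    set n₁ := (m - t + 1) / 2 with hn₁
    obtain ⟨S, hSM, hScard⟩ := Finset.exists_subset_card_eq (s := M) (n := n₁) (by omega)
    set σ := Fintype.equivFin V with hσdef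
    set A := (univ ×ˢ univ : Finset (V × V)).filter fun a =>
      G.Adj a.1 a.2 ∧
      ((f a.1 = 0 ∧ f a.2 = 1 ∧ s(a.1, a.2) ∈ S) ∨
       (f a.1 = 1 ∧ f a.2 = 0 ∧ s(a.1, a.2) ∉ S) ∨
       (f a.1 = f a.2 ∧ σ a.1 < σ a.2)) with hAdef
    have hmemA : ∀ u v : V, (u, v) ∈ A ↔ (G.Adj u v ∧
        ((f u = 0 ∧ f v = 1 ∧ s(u, v) ∈ S) ∨
         (f u = 1 ∧ f v = 0 ∧ s(u, v) ∉ S) ∨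
         (f u = f v ∧ σ u < σ v))) := by
      intro u v
      rw [hAdef, mem_filter]
      simp [mem_product]
    have hOr : IsOrientation G A := by
      constructor
      · rintro ⟨u, v⟩ ha
        exact ((hmemA u v).mp ha).1
      · intro u v huv
        have hne : u ≠ v := G.ne_of_adj huv
        have hσne : σ u ≠ σ v := fun h => hne (σ.injective h)
        have hsw : (s(v, u) : Sym2 V) = s(u, v) := Sym2.eq_swap
        rw [hmemA, hmemA, hsw]
        rcases fin2_eq (f u) with h1 | h1 <;> rcases fin2_eq (f v) with h2 | h2 <;>
          simp [huv, huv.symm, h1, h2] <;>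
          exact ⟨le_of_lt, fun h => lt_of_le_of_ne h hσne⟩
    have hA0 : labelCount A f 0 = t := labelCount_zero hOr f
    have hAcard : A.card = m := card_orientation hOr
    have hA1 : labelCount A f 1 = n₁ := by
      rw [← hScard]
      unfold labelCount
      apply Finset.card_bij (fun a _ => s(a.1, a.2))
      · rintro ⟨u, v⟩ ha
        rw [mem_filter, hmemA, arcLabel_eq_one_iff] at ha
        obtain ⟨⟨_, hd⟩, h1, h2⟩ := ha
        rcases hd with ⟨_, _, hS⟩ | ⟨hc, _, _⟩ | ⟨hc, _⟩
        · exact hS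
        · rw [h1] at hc; exact absurd hc (by decide)
        · rw [h1, h2] at hc; exact absurd hc (by decide)
      · rintro ⟨u, v⟩ h1 ⟨x, y⟩ h2 heq
        rw [mem_filter, arcLabel_eq_one_iff] at h1 h2
        rcases Sym2.eq_iff.mp heq with ⟨rfl, rfl⟩ | ⟨rfl, rfl⟩
        · rfl
        · rw [h1.2.1] at h2; exact absurd h2.2.2 (by decide)
      · intro e he
        have heM : e ∈ M := hSM he
        rw [hMdef, mem_filter] at heM
        induction e using Sym2.ind with
        | _ u v =>
          have hadj : G.Adj u v := (SimpleGraph.mem_edgeSet G).mp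
            (SimpleGraph.mem_edgeFinset.mp heM.1)
          have hne : f u ≠ f v := fun h => heM.2 ((mono_iff f u v).mpr h)
          rcases fin2_eq (f u) with h1 | h1 <;> rcases fin2_eq (f v) with h2 | h2
          · exact absurd (h1.trans h2.symm) hne
          · refine ⟨(u, v), mem_filter.mpr ⟨(hmemA u v).mpr ⟨hadj, Or.inl ⟨h1, h2, he⟩⟩, ?_⟩, rfl⟩
            rw [arcLabel_eq_one_iff]; exact ⟨h1, h2⟩
          · refine ⟨(v, u), mem_filter.mpr ⟨(hmemA v u).mpr ⟨hadj.symm,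
              Or.inl ⟨h2, h1, by rwa [Sym2.eq_swap]⟩⟩, ?_⟩, Sym2.eq_swap⟩
            rw [arcLabel_eq_one_iff]; exact ⟨h2, h1⟩
          · exact absurd (h1.trans h2.symm) hne
    have hsum := labelCount_sum A f
    refine ⟨A, hOr, f, hf, ?_⟩
    intro i hi j hj
    simp only [Finset.mem_insert, Finset.mem_singleton] at hi hj
    rcases hi with rfl | rfl | rfl <;> rcases hj with rfl | rfl | rfl <;>
      constructor <;> push_cast <;> omega
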